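/- The expression N(J_1, ..., J_s) = ∑_{ℓ=2}^{s} (|⋂_{m=1}^{ℓ-1} J_m \ J_ℓ| + |J_ℓ|) is invariant under permutation of the sets J_1, ..., J_s. -/

import Mathlib

open Finset

lemma aux_telescope (n : ℕ) (g : ℕ → Finset (Fin n)) :
    ∀ s, 1 ≤ s →
      ∑ ℓ ∈ Finset.Ico 1 s, (((Finset.range ℓ).inf g \ g ℓ).card + (g ℓ).card)
        = ∑ ℓ ∈ Finset.range s, (g ℓ).card - ((Finset.range s).inf g).card := by
  intro s hs
  induction s, hs using Nat.le_induction with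
  | base => simp
  | succ s hs ih =>
    rw [Finset.sum_Ico_succ_top hs, ih, Finset.sum_range_succ,
      Finset.range_add_one, Finset.inf_insert]
    have h0 : (Finset.range s).inf g ≤ g 0 :=
      Finset.inf_le (Finset.mem_range.mpr hs)
    have h2 : ((Finset.range s).inf g).card ≤ ∑ ℓ ∈ Finset.range s, (g ℓ).card := by
      calc ((Finset.range s).inf g).card ≤ (g 0).card := Finset.card_le_card h0
        _ ≤ _ := Finset.single_le_sum (f := fun ℓ => (g ℓ).card)
              (fun _ _ => Nat.zero_le _) (Finset.mem_range.mpr hs)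
    have hsd : ((Finset.range s).inf g \ g s).card + ((Finset.range s).inf g ∩ g s).card
        = ((Finset.range s).inf g).card := Finset.card_sdiff_add_card_inter _ _
    have hint : g s ⊓ (Finset.range s).inf g = (Finset.range s).inf g ∩ g s := by
      rw [Finset.inf_eq_inter, Finset.inter_comm]
    rw [hint]
    have h3 : ((Finset.range s).inf g ∩ g s).card ≤ ((Finset.range s).inf g).card :=
      Finset.card_le_card (Finset.inter_subset_left)
    omega

lemma aux_closed (n s : ℕ) (hs : 2 ≤ s) (J : Fin s → Finset (Fin n)) :
    (∑ ℓ ∈ Finset.univ.filter (fun ℓ : Fin s => 1 ≤ ℓ.val),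
      ((((Finset.univ.filter (fun m : Fin s => m < ℓ)).inf J) \ J ℓ).card + (J ℓ).card))
      = ∑ ℓ : Fin s, (J ℓ).card - (Finset.univ.inf J).card := by
  classical
  set g : ℕ → Finset (Fin n) := fun ℓ => if h : ℓ < s then J ⟨ℓ, h⟩ else ∅ with hg
  have hgJ : ∀ ℓ : Fin s, g ℓ.val = J ℓ := by
    intro ℓ; simp [hg, ℓ.isLt]
  have hinf : ∀ ℓ : Fin s,
      (Finset.univ.filter (fun m : Fin s => m < ℓ)).inf J = (Finset.range ℓ.val).inf g := by
    intro ℓ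
    have himg : (Finset.univ.filter (fun m : Fin s => m < ℓ)).image Fin.val
        = Finset.range ℓ.val := by
      ext x
      simp only [Finset.mem_image, Finset.mem_filter, Finset.mem_univ, true_and,
        Finset.mem_range]
      constructor
      · rintro ⟨m, hm, rfl⟩; exact hm
      · intro hx
        exact ⟨⟨x, lt_trans hx ℓ.isLt⟩, by simpa [Fin.lt_def] using hx, rfl⟩
    rw [← himg, Finset.inf_image]
    exact Finset.inf_congr rfl (fun m _ => (hgJ m).symm)
  have hufinf : Finset.univ.inf J = (Finset.range s).inf g := by
    have himg : (Finset.univ : Finset (Fin s)).image Fin.val = Finset.range s := by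
      ext x
      simp only [Finset.mem_image, Finset.mem_univ, true_and, Finset.mem_range]
      constructor
      · rintro ⟨m, rfl⟩; exact m.isLt
      · intro hx; exact ⟨⟨x, hx⟩, rfl⟩
    rw [← himg, Finset.inf_image]
    exact Finset.inf_congr rfl (fun m _ => (hgJ m).symm)
  have hstep : (∑ ℓ ∈ Finset.univ.filter (fun ℓ : Fin s => 1 ≤ ℓ.val),
      ((((Finset.univ.filter (fun m : Fin s => m < ℓ)).inf J) \ J ℓ).card + (J ℓ).card))
      = ∑ ℓ ∈ Finset.Ico 1 s, (((Finset.range ℓ).inf g \ g ℓ).card + (g ℓ).card) := by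
    calc ∑ ℓ ∈ Finset.univ.filter (fun ℓ : Fin s => 1 ≤ ℓ.val),
          ((((Finset.univ.filter (fun m : Fin s => m < ℓ)).inf J) \ J ℓ).card + (J ℓ).card)
        = ∑ ℓ ∈ Finset.univ.filter (fun ℓ : Fin s => 1 ≤ ℓ.val),
          (((Finset.range ℓ.val).inf g \ g ℓ.val).card + (g ℓ.val).card) := by
          refine Finset.sum_congr rfl (fun ℓ _ => ?_)
          rw [hinf ℓ, hgJ ℓ]
      _ = ∑ ℓ : Fin s, (if 1 ≤ ℓ.val then
            ((Finset.range ℓ.val).inf g \ g ℓ.val).card + (g ℓ.val).card else 0) :=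
          Finset.sum_filter _ _
      _ = ∑ ℓ ∈ Finset.range s, (if 1 ≤ ℓ then
            ((Finset.range ℓ).inf g \ g ℓ).card + (g ℓ).card else 0) :=
          (Fin.sum_univ_eq_sum_range
            (fun ℓ => if 1 ≤ ℓ then ((Finset.range ℓ).inf g \ g ℓ).card + (g ℓ).card else 0)
            s)
      _ = ∑ ℓ ∈ (Finset.range s).filter (fun ℓ => 1 ≤ ℓ),
            (((Finset.range ℓ).inf g \ g ℓ).card + (g ℓ).card) :=
          (Finset.sum_filter _ _).symm
      _ = ∑ ℓ ∈ Finset.Ico 1 s, (((Finset.range ℓ).inf g \ g ℓ).card + (g ℓ).card) := by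
          congr 1
          ext x; simp [Finset.mem_Ico, Finset.mem_range, and_comm]
  rw [hstep, aux_telescope n g s (le_trans one_le_two hs), hufinf]
  congr 1
  rw [← Fin.sum_univ_eq_sum_range (fun ℓ => (g ℓ).card) s]
  exact Finset.sum_congr rfl (fun ℓ _ => by rw [hgJ ℓ])

theorem stmt_3 (n s : ℕ) (hs : 2 ≤ s) (J : Fin s → Finset (Fin n)) (σ : Equiv.Perm (Fin s)) :
    (∑ ℓ ∈ Finset.univ.filter (fun ℓ : Fin s => 1 ≤ ℓ.val),
      ((((Finset.univ.filter (fun m : Fin s => m < ℓ)).inf (J ∘ σ)) \ (J ∘ σ) ℓ).card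
        + ((J ∘ σ) ℓ).card)) =
    ∑ ℓ ∈ Finset.univ.filter (fun ℓ : Fin s => 1 ≤ ℓ.val),
      ((((Finset.univ.filter (fun m : Fin s => m < ℓ)).inf J) \ J ℓ).card + (J ℓ).card) := by
  classical
  rw [aux_closed n s hs (J ∘ σ), aux_closed n s hs J]
  have hsum : ∑ ℓ : Fin s, ((J ∘ σ) ℓ).card = ∑ ℓ : Fin s, (J ℓ).card :=
    Equiv.sum_comp σ (fun ℓ => (J ℓ).card)
  have hinf : Finset.univ.inf (J ∘ σ) = Finset.univ.inf J := by
    have himg : (Finset.univ : Finset (Fin s)).image σ = Finset.univ := by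
      ext x
      simp only [Finset.mem_image, Finset.mem_univ, true_and, iff_true]
      exact ⟨σ.symm x, σ.apply_symm_apply x⟩
    rw [← Finset.inf_image, himg]
  rw [hsum, hinf]
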